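/- Let 0 < a ≤ b < 2, let α : ℝ → [a,b] be continuous, and let h₀ satisfy 1/a − 1/b < h₀ < 1 + 1/b − 1/a, with h₀ ≠ 1/α(x) for all x ∈ ℝ. Then for every u ∈ ℝ and every t ∈ ℝ, lim_{r→0⁺} ∫_ℝ | (t−z)_+^{h₀ − 1/α(u+rz)} − (−z)_+^{h₀ − 1/α(u+rz)} − (t−z)_+^{h₀ − 1/α(u)} + (−z)_+^{h₀ − 1/α(u)} |^{a,b} dz = 0, where s_+^γ = s^γ if s > 0 and s_+^γ = 0 if s ≤ 0. Consequently linear fractional multistable motion Y(t) = ∫ ((t−x)_+^{h₀−1/α(x)} − (−x)_+^{h₀−1/α(x)}) dM_α(x) satisfies the localisability condition of the main theorem at every u, with index h₀ and local form kernel k(t,z) = (t−z)_+^{h₀−1/α(u)} − (−z)_+^{h₀−1/α(u)}, so Y is h₀-localisable at u with local form the linear fractional α(u)-stable motion L_{α(u),h₀,1,0}. -/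

import Mathlib

open MeasureTheory Filter Set Topology ProbabilityTheory BoundedContinuousFunction

noncomputable section

/-- Membership in `F_α`: `f` is measurable and either a.e. zero or there is a (unique)
`λ > 0` with `∫ |f(x)/λ|^{α(x)} dx = 1`. -/
def MemFalpha (α f : ℝ → ℝ) : Prop :=
  Measurable f ∧ (f =ᵐ[volume] (0 : ℝ → ℝ) ∨ ∃ lam > (0:ℝ), ∫ x : ℝ, |f x / lam| ^ α x = 1)

/-- The quasinorm `‖f‖_α`, the unique `λ > 0` with `∫ |f(x)/λ|^{α(x)} dx = 1`
(and `0` if no such `λ` exists, e.g. if `f = 0` a.e.). -/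
def alphaNorm (α f : ℝ → ℝ) : ℝ :=
  sInf {lam : ℝ | 0 < lam ∧ ∫ x : ℝ, |f x / lam| ^ α x = 1}

/-- `|s|^{a,b} = max{|s|^a, |s|^b}`. -/
def pab (a b s : ℝ) : ℝ := max (|s| ^ a) (|s| ^ b)

/-- Membership in `F_{a,b}`: measurable with `∫ |f(x)|^{a,b} dx < ∞`. -/
def MemFab (a b : ℝ) (f : ℝ → ℝ) : Prop :=
  Measurable f ∧ Integrable (fun x : ℝ => pab a b (f x))

/-- The norm `‖f‖_p = (∫ |f(x)|^p dx)^{1/p}`. -/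
def pNorm (p : ℝ) (f : ℝ → ℝ) : ℝ := (∫ x : ℝ, |f x| ^ p) ^ (1 / p)

/-- Membership in `E₀`: Lebesgue measurable with finite Lebesgue measure. -/
def MemE0 (A : Set ℝ) : Prop := MeasurableSet A ∧ volume A < ⊤

/-- `s_+^γ`: equals `s^γ` if `s > 0` and `0` if `s ≤ 0`. -/
def posPow (s γ : ℝ) : ℝ := if 0 < s then s ^ γ else 0

namespace LFMSAux

lemma pab_nonneg (a b s : ℝ) : 0 ≤ pab a b s :=
  le_trans (Real.rpow_nonneg (abs_nonneg s) a) (le_max_left _ _)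

lemma pab_zero {a b : ℝ} (ha : a ≠ 0) (hb : b ≠ 0) : pab a b 0 = 0 := by
  simp [pab, Real.zero_rpow ha, Real.zero_rpow hb]

lemma abs_rpow_le_pab (a b x : ℝ) : |x| ^ a ≤ pab a b x := le_max_left _ _
lemma abs_rpow_le_pab' (a b x : ℝ) : |x| ^ b ≤ pab a b x := le_max_right _ _

lemma pab_le_of_abs_le {a b x y : ℝ} (ha : 0 ≤ a) (hab : a ≤ b) (h : |x| ≤ y) :
    pab a b x ≤ max (y ^ a) (y ^ b) :=
  max_le_max (Real.rpow_le_rpow (abs_nonneg x) h ha)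
    (Real.rpow_le_rpow (abs_nonneg x) h (ha.trans hab))

lemma continuous_pab {a b : ℝ} (ha : 0 ≤ a) (hb : 0 ≤ b) : Continuous (pab a b) := by
  unfold pab
  exact Continuous.max (continuous_abs.rpow_const fun x => Or.inr ha)
    (continuous_abs.rpow_const fun x => Or.inr hb)

lemma pab_sub_le {a b : ℝ} (ha : 0 ≤ a) (hab : a ≤ b) (x y : ℝ) :
    pab a b (x - y) ≤ 2 ^ b * (pab a b x + pab a b y) := by
  have hb : 0 ≤ b := ha.trans hab
  have habs : |x - y| ≤ 2 * max |x| |y| := by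
    have h1 : |x - y| ≤ |x| + |y| := by
      calc |x - y| = |x + -y| := by ring_nf
      _ ≤ |x| + |-y| := abs_add_le _ _
      _ = |x| + |y| := by rw [abs_neg]
    rcases le_total |x| |y| with h | h
    · have := max_eq_right h; rw [this]; linarith [abs_nonneg x]
    · have := max_eq_left h; rw [this]; linarith [abs_nonneg y]
  have hmaxnn : (0:ℝ) ≤ max |x| |y| := le_trans (abs_nonneg x) (le_max_left _ _)
  have key : ∀ p : ℝ, 0 ≤ p → p ≤ b → (∀ w : ℝ, |w| ^ p ≤ pab a b w) →
      |x - y| ^ p ≤ 2 ^ b * (pab a b x + pab a b y) := by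
    intro p hp hpb hw
    have hmax : (max |x| |y|) ^ p ≤ pab a b x + pab a b y := by
      rcases le_total |x| |y| with h | h
      · rw [max_eq_right h]
        exact (hw y).trans (le_add_of_nonneg_left (pab_nonneg a b x))
      · rw [max_eq_left h]
        exact (hw x).trans (le_add_of_nonneg_right (pab_nonneg a b y))
    calc |x - y| ^ p ≤ (2 * max |x| |y|) ^ p :=
          Real.rpow_le_rpow (abs_nonneg _) habs hp
    _ = 2 ^ p * (max |x| |y|) ^ p := Real.mul_rpow (by norm_num) hmaxnn
    _ ≤ 2 ^ b * (pab a b x + pab a b y) := by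
        apply mul_le_mul (Real.rpow_le_rpow_of_exponent_le one_le_two hpb) hmax
          (Real.rpow_nonneg hmaxnn p) (Real.rpow_nonneg (by norm_num) b)
  exact max_le (key a ha hab (abs_rpow_le_pab a b)) (key b hb le_rfl (abs_rpow_le_pab' a b))

lemma abs_posPow_le {m M h : ℝ} (hm : m ≤ h) (hM : h ≤ M) (s : ℝ) :
    |posPow s h| ≤ max (|s| ^ m) (|s| ^ M) := by
  unfold posPow
  split_ifs with hs
  · rw [abs_of_nonneg (Real.rpow_nonneg hs.le h), abs_of_pos hs]
    rcases le_total s 1 with h1 | h1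
    · exact le_max_of_le_left (Real.rpow_le_rpow_of_exponent_ge hs h1 hm)
    · exact le_max_of_le_right (Real.rpow_le_rpow_of_exponent_le h1 hM)
  · rw [abs_zero]
    exact le_trans (Real.rpow_nonneg (abs_nonneg s) m) (le_max_left _ _)

lemma pab_posPow_le {a b m M h : ℝ} (ha : 0 ≤ a) (hab : a ≤ b) (hm : m ≤ h) (hM : h ≤ M)
    (s : ℝ) :
    pab a b (posPow s h) ≤ |s| ^ (m * a) + |s| ^ (M * a) + |s| ^ (m * b) + |s| ^ (M * b) := by
  have hb : 0 ≤ b := ha.trans hab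
  have key : ∀ p : ℝ, 0 ≤ p → |posPow s h| ^ p ≤ |s| ^ (m * p) + |s| ^ (M * p) := by
    intro p hp
    have h1 : |posPow s h| ^ p ≤ (max (|s| ^ m) (|s| ^ M)) ^ p :=
      Real.rpow_le_rpow (abs_nonneg _) (abs_posPow_le hm hM s) hp
    have h2 : (max (|s| ^ m) (|s| ^ M)) ^ p ≤ (|s| ^ m) ^ p + (|s| ^ M) ^ p := by
      rcases le_total (|s| ^ m) (|s| ^ M) with h' | h'
      · rw [max_eq_right h']
        exact le_add_of_nonneg_left (Real.rpow_nonneg (Real.rpow_nonneg (abs_nonneg s) m) p)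
      · rw [max_eq_left h']
        exact le_add_of_nonneg_right (Real.rpow_nonneg (Real.rpow_nonneg (abs_nonneg s) M) p)
    rw [← Real.rpow_mul (abs_nonneg s) m p, ← Real.rpow_mul (abs_nonneg s) M p] at h2
    linarith
  have ka := key a ha
  have kb := key b hb
  have n1 : 0 ≤ |s| ^ (m * a) := Real.rpow_nonneg (abs_nonneg s) _
  have n2 : 0 ≤ |s| ^ (M * a) := Real.rpow_nonneg (abs_nonneg s) _
  have n3 : 0 ≤ |s| ^ (m * b) := Real.rpow_nonneg (abs_nonneg s) _
  have n4 : 0 ≤ |s| ^ (M * b) := Real.rpow_nonneg (abs_nonneg s) _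
  exact max_le (by linarith) (by linarith)

lemma abs_rpow_sub_rpow_le {h s s' : ℝ} (hh : h ≤ 1) (hs : 0 < s) (hss : s ≤ s') :
    |s' ^ h - s ^ h| ≤ |h| * s ^ (h - 1) * (s' - s) := by
  have hderiv : ∀ x ∈ Icc s s',
      HasDerivWithinAt (fun y : ℝ => y ^ h) (h * x ^ (h - 1)) (Icc s s') x := by
    intro x hx
    exact (Real.hasDerivAt_rpow_const (Or.inl (ne_of_gt (hs.trans_le hx.1)))).hasDerivWithinAt
  have hbound : ∀ x ∈ Icc s s', ‖h * x ^ (h - 1)‖ ≤ |h| * s ^ (h - 1) := by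
    intro x hx
    rw [norm_mul, Real.norm_eq_abs, Real.norm_eq_abs,
      abs_of_nonneg (Real.rpow_nonneg (hs.trans_le hx.1).le _)]
    exact mul_le_mul_of_nonneg_left
      (Real.rpow_le_rpow_of_nonpos hs hx.1 (by linarith)) (abs_nonneg h)
  have := (convex_Icc s s').norm_image_sub_le_of_norm_hasDerivWithin_le hderiv hbound
    ⟨le_rfl, hss⟩ ⟨hss, le_rfl⟩
  rwa [Real.norm_eq_abs, Real.norm_eq_abs, abs_of_nonneg (by linarith : (0:ℝ) ≤ s' - s)] at this

lemma intervalIntegrable_abs_rpow {p : ℝ} (hp : -1 < p) (A B : ℝ) :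
    IntervalIntegrable (fun x : ℝ => |x| ^ p) volume A B := by
  have h0 : ∀ c : ℝ, 0 ≤ c → IntervalIntegrable (fun x : ℝ => |x| ^ p) volume 0 c := by
    intro c hc
    have base := intervalIntegral.intervalIntegrable_rpow' (a := 0) (b := c) hp
    rw [intervalIntegrable_iff, uIoc_of_le hc] at base ⊢
    exact base.congr_fun (fun x hx => by rw [abs_of_pos hx.1]) measurableSet_Ioc
  have key : ∀ c : ℝ, IntervalIntegrable (fun x : ℝ => |x| ^ p) volume 0 c := by
    intro c
    rcases le_total 0 c with h | h
    · exact h0 c h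
    · have h1 := h0 (-c) (by linarith)
      have h2 := (IntervalIntegrable.iff_comp_neg (by simp)).mp h1
      simp only [abs_neg, neg_zero, neg_neg] at h2
      exact h2
  exact (key A).symm.trans (key B)

lemma integrableOn_abs_sub_rpow {p : ℝ} (hp : -1 < p) (c A B : ℝ) (hAB : A ≤ B) :
    IntegrableOn (fun z : ℝ => |c - z| ^ p) (Icc A B) := by
  have h1 : IntervalIntegrable (fun z : ℝ => |c - z| ^ p) volume A B := by
    have base := (intervalIntegrable_abs_rpow hp (c - A) (c - B)).comp_sub_left c
    simpa using base
  rw [integrableOn_Icc_iff_integrableOn_Ioc]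
  rwa [intervalIntegrable_iff, uIoc_of_le hAB] at h1

end LFMSAux

open LFMSAux

set_option maxHeartbeats 1000000 in
/-- localisability of linear fractional multistable motion: for every
`u` and `t`,
`∫ |(t−z)_+^{h₀−1/α(u+rz)} − (−z)_+^{h₀−1/α(u+rz)} − (t−z)_+^{h₀−1/α(u)}
   + (−z)_+^{h₀−1/α(u)}|^{a,b} dz → 0` as `r → 0⁺`;
this is the localisability condition of the main theorem at `u` with index `h₀` and
limit kernel `k(t,z) = (t−z)_+^{h₀−1/α(u)} − (−z)_+^{h₀−1/α(u)}`, so linear fractional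
multistable motion is `h₀`-localisable at `u` with local form `L_{α(u),h₀,1,0}`. -/
theorem linear_fractional_multistable_localisable (a b : ℝ)
    (ha : 0 < a) (hab : a ≤ b) (hb : b < 2)
    (α : ℝ → ℝ) (hαc : Continuous α) (hα : ∀ x, α x ∈ Set.Icc a b)
    (h₀ : ℝ) (hh₀l : 1 / a - 1 / b < h₀) (hh₀r : h₀ < 1 + 1 / b - 1 / a)
    (hh₀ : ∀ x, h₀ ≠ 1 / α x) :
    ∀ u t : ℝ,
      Tendsto (fun r : ℝ => ∫ z : ℝ,
          pab a b (posPow (t - z) (h₀ - 1 / α (u + r * z)) -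
            posPow (-z) (h₀ - 1 / α (u + r * z)) -
            posPow (t - z) (h₀ - 1 / α u) + posPow (-z) (h₀ - 1 / α u)))
        (𝓝[>] (0:ℝ)) (𝓝 0) := by
  intro u t
  have hb0 : 0 < b := lt_of_lt_of_le ha hab
  have hba : 1 / b ≤ 1 / a := one_div_le_one_div_of_le ha hab
  have h₀pos : 0 < h₀ := lt_of_le_of_lt (by linarith) hh₀l
  -- exponent range
  set m : ℝ := h₀ - 1 / a with hm_def
  set M : ℝ := h₀ - 1 / b with hM_def
  clear_value m M
  have hmM : m ≤ M := by rw [hm_def, hM_def]; linarith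
  have ha1 : (1 / a) * a = 1 := one_div_mul_cancel (ne_of_gt ha)
  have hb1 : (1 / b) * b = 1 := one_div_mul_cancel (ne_of_gt hb0)
  have hma : -1 < m * a := by
    rw [hm_def]; have : (h₀ - 1/a) * a = h₀ * a - 1 := by rw [sub_mul, ha1]
    rw [this]; nlinarith
  have hmb : -1 < m * b := by
    rw [hm_def]
    have e1 : (h₀ - 1/a) * b = h₀ * b - (1/a) * b := by ring
    rw [e1]
    nlinarith [mul_lt_mul_of_pos_right hh₀l hb0]
  have hMa : -1 < M * a := lt_of_lt_of_le hma (mul_le_mul_of_nonneg_right hmM ha.le)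
  have hMb : -1 < M * b := lt_of_lt_of_le hmb (mul_le_mul_of_nonneg_right hmM hb0.le)
  have hM1 : M - 1 < -(1 / a) := by rw [hM_def]; linarith
  have hM1' : M < 1 := by
    have : 0 < 1 / a := by positivity
    linarith
  have hq : (M - 1) * a < -1 := by nlinarith [mul_lt_mul_of_pos_right hM1 ha]
  -- exponent membership
  have hexp : ∀ x : ℝ, m ≤ h₀ - 1 / α x ∧ h₀ - 1 / α x ≤ M := by
    intro x
    obtain ⟨hax, hxb⟩ := hα x
    have hαx : 0 < α x := lt_of_lt_of_le ha hax
    constructor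
    · rw [hm_def]; have := one_div_le_one_div_of_le ha hax; linarith
    · rw [hM_def]; have := one_div_le_one_div_of_le hαx hxb; linarith
  -- constants
  set T : ℝ := max t 0 with hT_def
  set R : ℝ := 2 * |t| + 2 with hR_def
  clear_value T R
  have hR0 : 0 < R := by rw [hR_def]; positivity
  have hRT : -R ≤ T := by
    rw [hT_def, hR_def]
    have := abs_nonneg t
    have := le_max_right t 0
    linarith
  set C0 : ℝ := |m| + |M| + 1 with hC0_def
  set C1 : ℝ := C0 * |t| * 2 ^ (1 - M) with hC1_def
  set C2 : ℝ := max (C1 ^ a) (C1 ^ b) with hC2_def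
  set C3 : ℝ := 2 ^ b * 2 * C2 with hC3_def
  clear_value C0 C1 C2 C3
  have hC1nn : 0 ≤ C1 := by rw [hC1_def, hC0_def]; positivity
  have hC2nn : 0 ≤ C2 := by
    rw [hC2_def]
    exact le_trans (Real.rpow_nonneg hC1nn a) (le_max_left _ _)
  set ψ : ℝ → ℝ := fun s => |s| ^ (m * a) + |s| ^ (M * a) + |s| ^ (m * b) + |s| ^ (M * b)
    with hψ_def
  have hψnn : ∀ s, 0 ≤ ψ s := by
    intro s; rw [hψ_def]; positivity
  set crude : ℝ → ℝ :=
    fun z => 2 ^ b * (2 ^ b * (ψ (t - z) + ψ (-z)) + 2 ^ b * (ψ (t - z) + ψ (-z)))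
    with hcrude_def
  have hcrude_nn : ∀ z, 0 ≤ crude z := by
    intro z
    have h1 := hψnn (t - z); have h2 := hψnn (-z)
    rw [hcrude_def]
    have h2b : (0:ℝ) ≤ 2 ^ b := Real.rpow_nonneg (by norm_num) b
    positivity
  set tailf : ℝ → ℝ := fun z => C3 * (-z) ^ ((M - 1) * a) with htailf_def
  have hC3nn : 0 ≤ C3 := by
    rw [hC3_def]
    have h2b : (0:ℝ) ≤ 2 ^ b := Real.rpow_nonneg (by norm_num) b
    positivity
  have htailf_nn : ∀ z ∈ Iio (-R), 0 ≤ tailf z := by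
    intro z hz
    rw [htailf_def]
    have hz0 : 0 ≤ -z := by
      have : z < -R := hz
      linarith
    exact mul_nonneg hC3nn (Real.rpow_nonneg hz0 _)
  -- the tail estimate via the mean value theorem
  have htail : ∀ e : ℝ, m ≤ e → e ≤ M → ∀ z : ℝ, z < -R →
      |posPow (t - z) e - posPow (-z) e| ≤ C1 * (-z) ^ (M - 1) := by
    intro e he1 he2 z hz
    have habs_t : 0 ≤ |t| := abs_nonneg t
    have hzR : R < -z := by linarith
    have hzpos : (0:ℝ) < -z := by rw [hR_def] at hzR; linarith
    have ht1 : 0 < t - z := by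
      have h1 : -|t| ≤ t := neg_abs_le t
      rw [hR_def] at hzR; linarith
    have hp1 : posPow (t - z) e = (t - z) ^ e := if_pos ht1
    have hp2 : posPow (-z) e = (-z) ^ e := if_pos hzpos
    rw [hp1, hp2]
    set s₁ : ℝ := min (t - z) (-z) with hs₁_def
    set s₂ : ℝ := max (t - z) (-z) with hs₂_def
    clear_value s₁ s₂
    have habs : |(t - z) ^ e - (-z) ^ e| = |s₂ ^ e - s₁ ^ e| := by
      rcases le_total (t - z) (-z) with h | h
      · rw [hs₁_def, hs₂_def, min_eq_left h, max_eq_right h, abs_sub_comm]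
      · rw [hs₁_def, hs₂_def, min_eq_right h, max_eq_left h]
    have hs₁ : (-z) / 2 ≤ s₁ := by
      rw [hs₁_def]
      apply le_min
      · have h1 : -|t| ≤ t := neg_abs_le t
        rw [hR_def] at hzR; linarith
      · linarith
    have hhalf : 1 ≤ (-z) / 2 := by rw [hR_def] at hzR; linarith
    have hs₁pos : 0 < s₁ := lt_of_lt_of_le (by linarith) hs₁
    have hs₁₂ : s₁ ≤ s₂ := by rw [hs₁_def, hs₂_def]; exact min_le_max
    have hmvt := abs_rpow_sub_rpow_le (show e ≤ 1 by linarith) hs₁pos hs₁₂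
    have hd : s₂ - s₁ = |t| := by
      have h1 : -z - (t - z) = -t := by ring
      rw [hs₁_def, hs₂_def, max_sub_min_eq_abs, h1, abs_neg]
    have h5 : s₁ ^ (e - 1) ≤ 2 ^ (1 - M) * (-z) ^ (M - 1) := by
      calc s₁ ^ (e - 1) ≤ ((-z) / 2) ^ (e - 1) :=
            Real.rpow_le_rpow_of_nonpos (by linarith) hs₁ (by linarith)
      _ ≤ ((-z) / 2) ^ (M - 1) :=
            Real.rpow_le_rpow_of_exponent_le hhalf (by linarith)
      _ = (-z) ^ (M - 1) / 2 ^ (M - 1) := Real.div_rpow hzpos.le (by norm_num) _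
      _ = 2 ^ (1 - M) * (-z) ^ (M - 1) := by
            rw [div_eq_mul_inv, ← Real.rpow_neg (by norm_num : (0:ℝ) ≤ 2), neg_sub]
            ring
    have he_abs : |e| ≤ C0 := by
      rw [hC0_def]
      refine abs_le.mpr ⟨?_, ?_⟩
      · have h1 : -|m| ≤ m := neg_abs_le m
        have h2 : 0 ≤ |M| := abs_nonneg M
        linarith
      · have h1 : M ≤ |M| := le_abs_self M
        have h2 : 0 ≤ |m| := abs_nonneg m
        linarith
    have hC0nn : 0 ≤ C0 := le_trans (abs_nonneg e) he_abs
    have hs₁e : 0 ≤ s₁ ^ (e - 1) := Real.rpow_nonneg hs₁pos.le _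
    calc |(t - z) ^ e - (-z) ^ e| = |s₂ ^ e - s₁ ^ e| := habs
    _ ≤ |e| * s₁ ^ (e - 1) * (s₂ - s₁) := hmvt
    _ = |e| * s₁ ^ (e - 1) * |t| := by rw [hd]
    _ ≤ C0 * (2 ^ (1 - M) * (-z) ^ (M - 1)) * |t| := by
        apply mul_le_mul _ le_rfl habs_t
        · exact mul_nonneg hC0nn (le_trans hs₁e h5)
        · exact mul_le_mul he_abs h5 hs₁e hC0nn
    _ = C1 * (-z) ^ (M - 1) := by rw [hC1_def]; ring
  -- crude bound, valid everywhere
  have hcrude_bd : ∀ e e' : ℝ, m ≤ e → e ≤ M → m ≤ e' → e' ≤ M → ∀ z : ℝ,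
      pab a b (posPow (t - z) e - posPow (-z) e - posPow (t - z) e' + posPow (-z) e')
        ≤ crude z := by
    intro e e' he1 he2 hf1 hf2 z
    have hrw : posPow (t - z) e - posPow (-z) e - posPow (t - z) e' + posPow (-z) e'
        = (posPow (t - z) e - posPow (-z) e) - (posPow (t - z) e' - posPow (-z) e') := by
      ring
    rw [hrw, hcrude_def]
    have h2b : (0:ℝ) ≤ 2 ^ b := Real.rpow_nonneg (by norm_num) b
    have key : ∀ f : ℝ, m ≤ f → f ≤ M →
        pab a b (posPow (t - z) f - posPow (-z) f) ≤ 2 ^ b * (ψ (t - z) + ψ (-z)) := by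
      intro f hf1' hf2'
      refine (pab_sub_le ha.le hab _ _).trans ?_
      apply mul_le_mul_of_nonneg_left _ h2b
      have g1 := pab_posPow_le (a := a) (b := b) ha.le hab hf1' hf2' (t - z)
      have g2 := pab_posPow_le (a := a) (b := b) ha.le hab hf1' hf2' (-z)
      rw [hψ_def]
      exact add_le_add g1 g2
    refine (pab_sub_le ha.le hab _ _).trans ?_
    exact mul_le_mul_of_nonneg_left (add_le_add (key e he1 he2) (key e' hf1 hf2)) h2b
  -- tail bound for the full difference
  have htail_bd : ∀ e e' : ℝ, m ≤ e → e ≤ M → m ≤ e' → e' ≤ M → ∀ z : ℝ, z < -R →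
      pab a b (posPow (t - z) e - posPow (-z) e - posPow (t - z) e' + posPow (-z) e')
        ≤ tailf z := by
    intro e e' he1 he2 hf1 hf2 z hz
    have hzpos : (0:ℝ) < -z := by rw [hR_def] at hz; have := abs_nonneg t; linarith
    have hz1 : (1:ℝ) ≤ -z := by rw [hR_def] at hz; have := abs_nonneg t; linarith
    set X : ℝ := (-z) ^ (M - 1) with hX_def
    clear_value X
    have hXpos : 0 < X := by rw [hX_def]; exact Real.rpow_pos_of_pos hzpos _
    have hX1 : X ≤ 1 := by
      rw [hX_def]
      exact Real.rpow_le_one_of_one_le_of_nonpos hz1 (by linarith)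
    have hXa : X ^ a = (-z) ^ ((M - 1) * a) := by
      rw [hX_def, ← Real.rpow_mul hzpos.le]
    have key : ∀ f : ℝ, m ≤ f → f ≤ M →
        pab a b (posPow (t - z) f - posPow (-z) f) ≤ C2 * X ^ a := by
      intro f hf1' hf2'
      have h1 : |posPow (t - z) f - posPow (-z) f| ≤ C1 * X := by
        rw [hX_def]; exact htail f hf1' hf2' z hz
      have h2 := pab_le_of_abs_le ha.le hab h1
      refine h2.trans ?_
      have e1 : (C1 * X) ^ a = C1 ^ a * X ^ a := Real.mul_rpow hC1nn hXpos.le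
      have e2 : (C1 * X) ^ b = C1 ^ b * X ^ b := Real.mul_rpow hC1nn hXpos.le
      have hXba : X ^ b ≤ X ^ a := Real.rpow_le_rpow_of_exponent_ge hXpos hX1 hab
      have hXannn : 0 ≤ X ^ a := Real.rpow_nonneg hXpos.le a
      have hXbnnn : 0 ≤ X ^ b := Real.rpow_nonneg hXpos.le b
      have hc2a : C1 ^ a ≤ C2 := by rw [hC2_def]; exact le_max_left _ _
      have hc2b : C1 ^ b ≤ C2 := by rw [hC2_def]; exact le_max_right _ _
      rw [e1, e2]
      apply max_le
      · exact mul_le_mul hc2a le_rfl hXannn hC2nn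
      · exact mul_le_mul hc2b hXba hXbnnn hC2nn
    have hrw : posPow (t - z) e - posPow (-z) e - posPow (t - z) e' + posPow (-z) e'
        = (posPow (t - z) e - posPow (-z) e) - (posPow (t - z) e' - posPow (-z) e') := by
      ring
    have htz : tailf z = C3 * X ^ a := by
      rw [htailf_def]
      show C3 * (-z) ^ ((M - 1) * a) = C3 * X ^ a
      rw [hXa]
    rw [hrw, htz]
    refine (pab_sub_le ha.le hab _ _).trans ?_
    have h2b : (0:ℝ) ≤ 2 ^ b := Real.rpow_nonneg (by norm_num) b
    calc 2 ^ b * (pab a b (posPow (t - z) e - posPow (-z) e)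
          + pab a b (posPow (t - z) e' - posPow (-z) e'))
        ≤ 2 ^ b * (C2 * X ^ a + C2 * X ^ a) :=
          mul_le_mul_of_nonneg_left (add_le_add (key e he1 he2) (key e' hf1 hf2)) h2b
    _ = C3 * X ^ a := by rw [hC3_def]; ring
  -- the dominating function
  set G : ℝ → ℝ := fun z =>
      Set.indicator (Iio (-R)) tailf z + Set.indicator (Icc (-R) T) crude z with hG_def
  have hG_eval : ∀ z : ℝ, G z =
      Set.indicator (Iio (-R)) tailf z + Set.indicator (Icc (-R) T) crude z := by
    intro z; rw [hG_def]
  -- integrability of G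
  have hG_int : Integrable G := by
    have hint_tail : IntegrableOn tailf (Iio (-R)) := by
      have base : IntegrableOn (fun x : ℝ => x ^ ((M - 1) * a)) (Ioi R) :=
        (integrableOn_Ioi_rpow_iff hR0).mpr hq
      have hneg := ((Measure.measurePreserving_neg (volume : Measure ℝ)).integrableOn_comp_preimage
        (Homeomorph.neg ℝ).measurableEmbedding).mpr base
      have hset : (Neg.neg ⁻¹' (Ioi R) : Set ℝ) = Iio (-R) := by
        ext x
        simp only [mem_preimage, mem_Ioi, mem_Iio]
        constructor <;> intro h <;> linarith
      rw [hset] at hneg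
      have : IntegrableOn (fun z : ℝ => (-z) ^ ((M - 1) * a)) (Iio (-R)) := hneg
      rw [htailf_def]
      exact this.const_mul C3
    have hint_crude : IntegrableOn crude (Icc (-R) T) := by
      have hψ1 : IntegrableOn (fun z : ℝ => ψ (t - z)) (Icc (-R) T) := by
        have h1 := integrableOn_abs_sub_rpow hma t (-R) T hRT
        have h2 := integrableOn_abs_sub_rpow hMa t (-R) T hRT
        have h3 := integrableOn_abs_sub_rpow hmb t (-R) T hRT
        have h4 := integrableOn_abs_sub_rpow hMb t (-R) T hRT
        rw [hψ_def]
        exact ((h1.add h2).add h3).add h4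
      have hψ2 : IntegrableOn (fun z : ℝ => ψ (-z)) (Icc (-R) T) := by
        have h1 := integrableOn_abs_sub_rpow hma 0 (-R) T hRT
        have h2 := integrableOn_abs_sub_rpow hMa 0 (-R) T hRT
        have h3 := integrableOn_abs_sub_rpow hmb 0 (-R) T hRT
        have h4 := integrableOn_abs_sub_rpow hMb 0 (-R) T hRT
        have e0 : ∀ p : ℝ, (fun z : ℝ => |0 - z| ^ p) = fun z : ℝ => |-z| ^ p := by
          intro p; funext z; rw [zero_sub]
        rw [e0] at h1 h2 h3 h4
        rw [hψ_def]
        exact ((h1.add h2).add h3).add h4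
      have hsum : IntegrableOn (fun z : ℝ => ψ (t - z) + ψ (-z)) (Icc (-R) T) :=
        hψ1.add hψ2
      rw [hcrude_def]
      exact ((hsum.const_mul (2^b)).add (hsum.const_mul (2^b))).const_mul (2^b)
    rw [hG_def]
    exact (hint_tail.integrable_indicator measurableSet_Iio).add
      (hint_crude.integrable_indicator measurableSet_Icc)
  -- measurability of the integrands
  have hαm : Measurable α := hαc.measurable
  have hposPow_meas : ∀ (g e : ℝ → ℝ), Measurable g → Measurable e →
      Measurable (fun z : ℝ => posPow (g z) (e z)) := by
    intro g e hg he
    unfold posPow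
    exact Measurable.ite (measurableSet_lt measurable_const hg) (hg.pow he) measurable_const
  have he_meas : ∀ r : ℝ, Measurable (fun z : ℝ => h₀ - 1 / α (u + r * z)) := by
    intro r
    exact measurable_const.sub
      (measurable_const.div (hαm.comp (measurable_const.add (measurable_id.const_mul r))))
  have hF_meas : ∀ r : ℝ, AEStronglyMeasurable (fun z : ℝ =>
      pab a b (posPow (t - z) (h₀ - 1 / α (u + r * z)) -
        posPow (-z) (h₀ - 1 / α (u + r * z)) -
        posPow (t - z) (h₀ - 1 / α u) + posPow (-z) (h₀ - 1 / α u))) volume := by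
    intro r
    have h1 := hposPow_meas (fun z => t - z) _ (measurable_const.sub measurable_id) (he_meas r)
    have h2 := hposPow_meas (fun z => -z) _ measurable_id.neg (he_meas r)
    have h3 := hposPow_meas (fun z => t - z) (fun _ => h₀ - 1 / α u)
      (measurable_const.sub measurable_id) measurable_const
    have h4 := hposPow_meas (fun z => -z) (fun _ => h₀ - 1 / α u)
      measurable_id.neg measurable_const
    exact ((continuous_pab ha.le hb0.le).measurable.comp
      (((h1.sub h2).sub h3).add h4)).aestronglyMeasurable
  -- the uniform bound
  have hbound : ∀ r : ℝ, ∀ z : ℝ,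
      ‖pab a b (posPow (t - z) (h₀ - 1 / α (u + r * z)) -
        posPow (-z) (h₀ - 1 / α (u + r * z)) -
        posPow (t - z) (h₀ - 1 / α u) + posPow (-z) (h₀ - 1 / α u))‖ ≤ G z := by
    intro r z
    obtain ⟨he1, he2⟩ := hexp (u + r * z)
    obtain ⟨hf1, hf2⟩ := hexp u
    rw [Real.norm_eq_abs, abs_of_nonneg (pab_nonneg a b _)]
    rcases lt_trichotomy z (-R) with hz | hz | hz
    · -- tail region
      have m1 : z ∈ Iio (-R) := mem_Iio.mpr hz
      have m2 : z ∉ Icc (-R) T := fun hmem => absurd hmem.1 (not_le.mpr hz)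
      rw [hG_eval z, Set.indicator_of_mem m1 tailf, Set.indicator_of_notMem m2 crude]
      have := htail_bd _ _ he1 he2 hf1 hf2 z hz
      have hcnn := hcrude_nn z
      linarith [this]
    · -- boundary point z = -R
      have m1 : z ∉ Iio (-R) := by rw [mem_Iio, hz]; exact lt_irrefl _
      have m2 : z ∈ Icc (-R) T := ⟨le_of_eq hz.symm, hz.le.trans hRT⟩
      rw [hG_eval z, Set.indicator_of_notMem m1 tailf, Set.indicator_of_mem m2 crude]
      have := hcrude_bd _ _ he1 he2 hf1 hf2 z
      linarith [this]
    · rcases le_or_gt z T with hzT | hzT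
      · -- middle region
        have m1 : z ∉ Iio (-R) := fun h => lt_asymm hz (mem_Iio.mp h)
        have m2 : z ∈ Icc (-R) T := ⟨hz.le, hzT⟩
        rw [hG_eval z, Set.indicator_of_notMem m1 tailf, Set.indicator_of_mem m2 crude]
        have := hcrude_bd _ _ he1 he2 hf1 hf2 z
        linarith [this]
      · -- right region: everything vanishes
        have hzt : t - z < 0 := by
          have : t ≤ T := by rw [hT_def]; exact le_max_left _ _
          linarith
        have hz0 : -z < 0 := by
          have : (0:ℝ) ≤ T := by rw [hT_def]; exact le_max_right _ _
          linarith
        have hp : ∀ e : ℝ, posPow (t - z) e = 0 := fun e => if_neg (asymm hzt)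
        have hp' : ∀ e : ℝ, posPow (-z) e = 0 := fun e => if_neg (asymm hz0)
        rw [hp, hp, hp', hp']
        have : (0:ℝ) - 0 - 0 + 0 = 0 := by ring
        rw [this, pab_zero (ne_of_gt ha) (ne_of_gt hb0)]
        rw [hG_eval z]
        have g1 : 0 ≤ Set.indicator (Iio (-R)) tailf z :=
          Set.indicator_nonneg htailf_nn z
        have g2 : 0 ≤ Set.indicator (Icc (-R) T) crude z :=
          Set.indicator_nonneg (fun x _ => hcrude_nn x) z
        linarith
  -- pointwise convergence
  have hαu : 0 < α u := lt_of_lt_of_le ha (hα u).1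
  have hlim : ∀ᵐ z : ℝ, Tendsto (fun r : ℝ =>
      pab a b (posPow (t - z) (h₀ - 1 / α (u + r * z)) -
        posPow (-z) (h₀ - 1 / α (u + r * z)) -
        posPow (t - z) (h₀ - 1 / α u) + posPow (-z) (h₀ - 1 / α u)))
      (𝓝[>] (0:ℝ)) (𝓝 0) := by
    have hnull : volume ({0, t} : Set ℝ) = 0 :=
      Set.Finite.measure_zero (Set.toFinite _) volume
    have hae : ∀ᵐ z : ℝ, z ∉ ({0, t} : Set ℝ) :=
      (MeasureTheory.measure_eq_zero_iff_ae_notMem).mp hnull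
    filter_upwards [hae] with z hz
    have hz0 : z ≠ 0 := fun h => hz (by rw [h]; exact Or.inl rfl)
    have hzt' : z ≠ t := fun h => hz (Or.inr h)
    have hzt : t - z ≠ 0 := sub_ne_zero.mpr (Ne.symm hzt')
    have h1 : Tendsto (fun r : ℝ => u + r * z) (𝓝[>] (0:ℝ)) (𝓝 u) := by
      have hc : Continuous (fun r : ℝ => u + r * z) :=
        continuous_const.add (continuous_id.mul continuous_const)
      have := (hc.tendsto 0).mono_left (nhdsWithin_le_nhds (s := Set.Ioi (0:ℝ)))
      simpa using this
    have h2 : Tendsto (fun r : ℝ => h₀ - 1 / α (u + r * z)) (𝓝[>] (0:ℝ))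
        (𝓝 (h₀ - 1 / α u)) :=
      tendsto_const_nhds.sub (tendsto_const_nhds.div ((hαc.tendsto u).comp h1) (ne_of_gt hαu))
    have h3 : ∀ s : ℝ, s ≠ 0 →
        Tendsto (fun r : ℝ => posPow s (h₀ - 1 / α (u + r * z))) (𝓝[>] (0:ℝ))
          (𝓝 (posPow s (h₀ - 1 / α u))) := by
      intro s hs
      rcases lt_or_gt_of_ne hs with hneg | hpos
      · simp only [posPow, if_neg (asymm hneg)]
        exact tendsto_const_nhds
      · simp only [posPow, if_pos hpos]
        exact ((Real.continuousAt_const_rpow (ne_of_gt hpos)).tendsto).comp h2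
    have hneg0 : -z ≠ 0 := neg_ne_zero.mpr hz0
    have hDlim := (((h3 (t - z) hzt).sub (h3 (-z) hneg0)).sub
        (tendsto_const_nhds (x := posPow (t - z) (h₀ - 1 / α u)))).add
        (tendsto_const_nhds (x := posPow (-z) (h₀ - 1 / α u)))
    have hzero : posPow (t - z) (h₀ - 1 / α u) - posPow (-z) (h₀ - 1 / α u) -
        posPow (t - z) (h₀ - 1 / α u) + posPow (-z) (h₀ - 1 / α u) = 0 := by ring
    rw [hzero] at hDlim
    have := ((continuous_pab (a := a) (b := b) ha.le hb0.le).tendsto 0).comp hDlim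
    rwa [pab_zero (ne_of_gt ha) (ne_of_gt hb0)] at this
  -- dominated convergence
  have main := MeasureTheory.tendsto_integral_filter_of_dominated_convergence
    (μ := (volume : Measure ℝ)) (l := 𝓝[>] (0:ℝ))
    (F := fun (r : ℝ) (z : ℝ) =>
      pab a b (posPow (t - z) (h₀ - 1 / α (u + r * z)) -
        posPow (-z) (h₀ - 1 / α (u + r * z)) -
        posPow (t - z) (h₀ - 1 / α u) + posPow (-z) (h₀ - 1 / α u)))
    (f := fun _ : ℝ => (0:ℝ)) G
    (Eventually.of_forall hF_meas)
    (Eventually.of_forall fun r => Eventually.of_forall (hbound r))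
    hG_int hlim
  rw [MeasureTheory.integral_zero] at main
  exact main
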